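/- The lower bound is tight: let S, S' be finite sets with |S| = |S'| = n, and let p ∈ [0,1] with p·n an integer and p ≥ 1 − |S∩S'|/n. Then there exists a function h: universe → {0,1} with E_{Z∼uniform(S)}[h] = p and E_{Z∼uniform(S')}[h] = p − (1 − |S∩S'|/n). -/

import Mathlib

/-- Tightness of the lower bound: if `|S| = |S'| = n`, `p·n` is an integer
and `p ≥ 1 − |S∩S'|/n`, there is a `{0,1}`-valued `h` with mean `p` under uniform(S) and
mean `p − (1 − |S∩S'|/n)` under uniform(S'). -/
theorem lower_bound_tight {α : Type*} [DecidableEq α]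
    (S S' : Finset α) (hS : S.Nonempty) (hS' : S'.Nonempty)
    (n : ℕ) (hSn : S.card = n) (hS'n : S'.card = n)
    (p : ℝ) (hp : p ∈ Set.Icc (0 : ℝ) 1) (hint : ∃ k : ℕ, p * (n : ℝ) = (k : ℝ))
    (hpq : p ≥ 1 - ((S ∩ S').card : ℝ) / (n : ℝ)) :
    ∃ h : α → ℝ, (∀ z, h z = 0 ∨ h z = 1) ∧
      (∑ z ∈ S, h z) / (n : ℝ) = p ∧
      (∑ z ∈ S', h z) / (n : ℝ) = p - (1 - ((S ∩ S').card : ℝ) / (n : ℝ)) := by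
  obtain ⟨k, hk⟩ := hint
  have hn0 : 0 < n := hSn ▸ Finset.card_pos.mpr hS
  have hnR : (0 : ℝ) < (n : ℝ) := by exact_mod_cast hn0
  set m := (S ∩ S').card with hm
  have hmn : m ≤ n := hSn ▸ Finset.card_le_card (Finset.inter_subset_left)
  have hkn : k ≤ n := by
    have : (k : ℝ) ≤ (n : ℝ) := by rw [← hk]; nlinarith [hp.2, hp.1]
    exact_mod_cast this
  have hnmk : n - m ≤ k := by
    have h1 : ((n : ℝ) - m) ≤ (k : ℝ) := by
      rw [← hk]
      have h2 : (1 - (m : ℝ) / n) * n ≤ p * n :=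
        mul_le_mul_of_nonneg_right (by linarith [hpq]) (le_of_lt hnR)
      calc (n : ℝ) - m = (1 - (m : ℝ) / n) * n := by field_simp
        _ ≤ p * n := h2
    have : ((n - m : ℕ) : ℝ) ≤ (k : ℝ) := by rw [Nat.cast_sub hmn]; exact h1
    exact_mod_cast this
  have hsz : k - (n - m) ≤ (S ∩ S').card := by rw [← hm]; omega
  obtain ⟨A, hA, hAcard⟩ := Finset.exists_subset_card_eq (s := S ∩ S') (n := k - (n - m)) hsz
  set T : Finset α := (S \ S') ∪ A with hT
  have hsd : (S \ S').card = n - m := by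
    have := Finset.card_sdiff_add_card_inter S S'
    omega
  refine ⟨fun z => if z ∈ T then 1 else 0, fun z => by by_cases h : z ∈ T <;> simp [h], ?_, ?_⟩
  · have hTS : T ⊆ S := Finset.union_subset (Finset.sdiff_subset)
      (hA.trans Finset.inter_subset_left)
    have hdisj : Disjoint (S \ S') A := by
      refine Finset.disjoint_left.mpr fun x hx hxA => ?_
      exact (Finset.mem_sdiff.mp hx).2 ((Finset.mem_inter.mp (hA hxA)).2)
    have hsum : (∑ z ∈ S, (if z ∈ T then (1 : ℝ) else 0)) = T.card := by
      rw [Finset.sum_ite_mem, Finset.inter_eq_right.mpr hTS, Finset.sum_const,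
        nsmul_eq_mul, mul_one]
    have hTcard : T.card = k := by
      rw [hT, Finset.card_union_of_disjoint hdisj, hsd, hAcard]; omega
    rw [hsum, hTcard, div_eq_iff (ne_of_gt hnR)]; linarith [hk]
  · have hS'T : S' ∩ T = A := by
      rw [hT, Finset.inter_union_distrib_left]
      have h1 : S' ∩ (S \ S') = ∅ := Finset.inter_sdiff_self S' S
      have h2 : S' ∩ A = A := Finset.inter_eq_right.mpr
        (hA.trans Finset.inter_subset_right)
      rw [h1, h2, Finset.empty_union]
    have hsum : (∑ z ∈ S', (if z ∈ T then (1 : ℝ) else 0)) = A.card := by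
      rw [Finset.sum_ite_mem, hS'T, Finset.sum_const, nsmul_eq_mul, mul_one]
    rw [hsum, hAcard]
    have hcast : ((k - (n - m) : ℕ) : ℝ) = (k : ℝ) - ((n : ℝ) - (m : ℝ)) := by
      rw [Nat.cast_sub hnmk, Nat.cast_sub hmn]
    rw [hcast, div_eq_iff (ne_of_gt hnR), ← hk]
    field_simp
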